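/- There exists a positive real R such that the following holds for every integer r ≥ R and every real 0 < ε ≤ 1/2: if X is a finite set of size n and X_1, …, X_r ⊆ X are subsets each of size at least (1-ε)n, then there exists a set I ⊆ {1, …, r} of size |I| = ⌈r/4⌉ such that |⋂_{i∈I} X_i| ≥ (1-2ε)^{⌈r/4⌉} · n. -/

import Mathlib

open Finset

-- membership in Finset.inf of Finset-valued function
lemma aux_mem_inf {β α : Type*} [DecidableEq β] [DecidableEq α] [Fintype α]
    (f : β → Finset α) (I : Finset β) (x : α) :
    x ∈ I.inf f ↔ ∀ i ∈ I, x ∈ f i := by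
  induction I using Finset.induction with
  | empty => simp [Finset.inf_empty, Finset.top_eq_univ]
  | insert a s ha ih => simp [Finset.inf_insert, ih]

-- (1-2ε)^m ≤ 1 - εm when ε(m-1) ≤ 1/2
lemma aux_pow (ε : ℝ) (hε : 0 ≤ ε) (h2 : ε ≤ 1/2) :
    ∀ m : ℕ, ε * ((m : ℝ) - 1) ≤ 1/2 → (1 - 2*ε)^m ≤ 1 - ε * m := by
  intro m
  induction m with
  | zero => simp
  | succ k ih =>
    intro h
    push_cast at h ⊢
    have hk : ε * ((k : ℝ) - 1) ≤ 1/2 := by nlinarith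
    have hik := ih (by push_cast; linarith [hk])
    have h1 : (0:ℝ) ≤ 1 - 2*ε := by linarith
    have h3 : (0:ℝ) ≤ (1 - 2*ε)^k := pow_nonneg h1 k
    have hp : (1 - 2*ε)^(k+1) = (1 - 2*ε)^k * (1 - 2*ε) := pow_succ _ _
    nlinarith

lemma aux_tang_up (m' a : ℕ) : ∀ k : ℕ,
    a.choose (m'+1) + k * a.choose m' ≤ (a+k).choose (m'+1) := by
  intro k
  induction k with
  | zero => simp
  | succ k ih =>
    have h1 : (a+k+1).choose (m'+1) = (a+k).choose m' + (a+k).choose (m'+1) :=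
      Nat.choose_succ_succ' (a+k) m'
    have h2 : a.choose m' ≤ (a+k).choose m' := Nat.choose_le_choose m' (Nat.le_add_right a k)
    have : a.choose (m'+1) + (k+1) * a.choose m'
        = (a.choose (m'+1) + k * a.choose m') + a.choose m' := by ring
    rw [show a+(k+1) = a+k+1 by ring, h1, this]
    omega

lemma aux_tang_down (m' d : ℕ) : ∀ k : ℕ,
    (d+k).choose (m'+1) ≤ d.choose (m'+1) + k * ((d+k).choose m') := by
  intro k
  induction k with
  | zero => simp
  | succ k ih =>
    have h1 : (d+k+1).choose (m'+1) = (d+k).choose m' + (d+k).choose (m'+1) :=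
      Nat.choose_succ_succ' (d+k) m'
    have h2 : (d+k).choose m' ≤ (d+k+1).choose m' := Nat.choose_le_choose m' (by omega)
    have h3 : k * ((d+k).choose m') ≤ k * ((d+k+1).choose m') := Nat.mul_le_mul_left k h2
    have : (d+(k+1)).choose (m'+1) = (d+k+1).choose (m'+1) := by ring_nf
    rw [this, h1]
    have : d.choose (m'+1) + (k+1) * ((d+(k+1)).choose m')
        = d.choose (m'+1) + k * ((d+k+1).choose m') + (d+k+1).choose m' := by ring_nf
    omega

-- discrete tangent line inequality for binomial coefficients
lemma aux_tangent (m' a d : ℕ) :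
    a.choose (m'+1) + d * a.choose m' ≤ d.choose (m'+1) + a * a.choose m' := by
  rcases le_total a d with h | h
  · obtain ⟨k, rfl⟩ := Nat.exists_eq_add_of_le h
    have h1 := aux_tang_up m' a k
    have h2 : (a+k) * a.choose m' = a * a.choose m' + k * a.choose m' := by ring
    omega
  · obtain ⟨k, rfl⟩ := Nat.exists_eq_add_of_le h
    have h1 := aux_tang_down m' d k
    have h2 : (d+k) * (d+k).choose m' = d * (d+k).choose m' + k * ((d+k).choose m') := by ring
    omega

set_option maxHeartbeats 1000000 in

/-- There exists a positive real `R` such that for every integer `r ≥ R` and every real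
`0 < ε ≤ 1/2`, if `X` is a finite set of size `n` and `X_1, …, X_r ⊆ X` have size at least
`(1-ε)n`, then some `I ⊆ [r]` with `|I| = ⌈r/4⌉` satisfies
`|⋂_{i ∈ I} X_i| ≥ (1-2ε)^{⌈r/4⌉} n`. -/
theorem stmt3 :
    ∃ R : ℝ, 0 < R ∧ ∀ r : ℕ, R ≤ (r : ℝ) → ∀ ε : ℝ, 0 < ε → ε ≤ 1 / 2 →
      ∀ (α : Type) [DecidableEq α] [Fintype α] (X : Finset α) (f : Fin r → Finset α),
        (∀ i, f i ⊆ X) →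
        (∀ i, (1 - ε) * (X.card : ℝ) ≤ ((f i).card : ℝ)) →
        ∃ I : Finset (Fin r), I.card = Nat.ceil ((r : ℝ) / 4) ∧
          (1 - 2 * ε) ^ (Nat.ceil ((r : ℝ) / 4)) * (X.card : ℝ) ≤ ((I.inf f).card : ℝ) := by
  classical
  refine ⟨8, by norm_num, ?_⟩
  intro r hr ε hε hε2 α _ _ X f hsub hcard
  set n := X.card with hn
  have hn0 : (0:ℝ) ≤ (n:ℝ) := Nat.cast_nonneg n
  have hr0 : (0:ℝ) < (r:ℝ) := by linarith
  set m := Nat.ceil ((r:ℝ)/4) with hm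
  have hm1 : 1 ≤ m := Nat.ceil_pos.mpr (by positivity)
  have hmr : m ≤ r := Nat.ceil_le.mpr (by linarith)
  have hm4 : (m:ℝ) - 1 ≤ (r:ℝ)/4 := by
    have := Nat.ceil_lt_add_one (show (0:ℝ) ≤ (r:ℝ)/4 by positivity)
    rw [← hm] at this
    linarith
  have hfn : ∀ i, (f i).card ≤ n := fun i => card_le_card (hsub i)
  have hεn : ∀ i, ((X \ f i).card : ℝ) ≤ ε * n := by
    intro i
    rw [card_sdiff_of_subset (hsub i), Nat.cast_sub (hfn i)]
    linarith [hcard i]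
  rcases le_or_gt (ε * r) 2 with hA | hB
  · -- Case A : trivial union bound
    obtain ⟨I, hI⟩ := (powersetCard_nonempty (n := m)
      (s := (univ : Finset (Fin r)))).mpr (by simpa using hmr)
    obtain ⟨hIsub, hIcard⟩ := mem_powersetCard.mp hI
    refine ⟨I, hIcard, ?_⟩
    have hIne : I.Nonempty := card_pos.mp (by rw [hIcard]; omega)
    obtain ⟨i0, hi0⟩ := hIne
    have hXs : I.inf f ⊆ X := le_trans (Finset.inf_le hi0) (hsub i0)
    have hsd : X \ I.inf f ⊆ I.biUnion (fun i => X \ f i) := by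
      intro x hx
      rw [mem_sdiff] at hx
      rw [mem_biUnion]
      obtain ⟨hxX, hxn⟩ := hx
      rw [aux_mem_inf] at hxn
      push_neg at hxn
      obtain ⟨i, hiI, hxi⟩ := hxn
      exact ⟨i, hiI, mem_sdiff.mpr ⟨hxX, hxi⟩⟩
    have hc1 : ((X \ I.inf f).card : ℝ) ≤ (m:ℝ) * (ε * n) := by
      calc ((X \ I.inf f).card : ℝ) ≤ ((I.biUnion fun i => X \ f i).card : ℝ) := by
            exact_mod_cast card_le_card hsd
        _ ≤ ((∑ i ∈ I, (X \ f i).card : ℕ) : ℝ) := by exact_mod_cast card_biUnion_le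
        _ = ∑ i ∈ I, ((X \ f i).card : ℝ) := by push_cast; rfl
        _ ≤ ∑ i ∈ I, ε * n := sum_le_sum (fun i _ => hεn i)
        _ = (m:ℝ) * (ε * n) := by rw [sum_const, hIcard, nsmul_eq_mul]
    have hc2 : ((I.inf f).card :ℝ) = (n:ℝ) - ((X \ I.inf f).card :ℝ) := by
      rw [card_sdiff_of_subset hXs, Nat.cast_sub (card_le_card hXs)]; ring
    have hpow : (1 - 2*ε)^m ≤ 1 - ε * m := by
      apply aux_pow ε hε.le hε2 m
      nlinarith [mul_le_mul_of_nonneg_left hm4 hε.le]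
    have := mul_le_mul_of_nonneg_right hpow hn0
    nlinarith [hc1, hc2]
  · -- Case B : averaging + convexity
    obtain ⟨m', hm'⟩ : ∃ m', m = m' + 1 := ⟨m - 1, by omega⟩
    set a := Nat.floor ((1-ε)*(r:ℝ)) with hadef
    have h1ε : (0:ℝ) ≤ 1 - ε := by linarith
    have haub : (a:ℝ) ≤ (1-ε)*(r:ℝ) := Nat.floor_le (by positivity)
    have halb : (1-ε)*(r:ℝ) - 1 < (a:ℝ) := Nat.sub_one_lt_floor _
    have ha : (1-2*ε)*(r:ℝ) + 2*ε*((m:ℝ)-1) ≤ (a:ℝ) := by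
      nlinarith [mul_le_mul_of_nonneg_left hm4 hε.le]
    have h2ε : (0:ℝ) ≤ 1 - 2*ε := by linarith
    have hjm : ∀ j ∈ range m, (j:ℝ) ≤ (m:ℝ) - 1 := by
      intro j hj
      have h := mem_range.mp hj
      have : (j:ℝ) + 1 ≤ (m:ℝ) := by exact_mod_cast h
      linarith
    have hstep : ∀ j ∈ range m, (1-2*ε) * ((r:ℝ) - (j:ℝ)) ≤ (a:ℝ) - (j:ℝ) := by
      intro j hj
      nlinarith [ha, mul_le_mul_of_nonneg_left (hjm j hj) (by linarith : (0:ℝ) ≤ 2*ε)]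
    have hjr' : ∀ j ∈ range m, j ≤ r := fun j hj => le_trans (le_of_lt (mem_range.mp hj)) hmr
    have hpos : ∀ j ∈ range m, (0:ℝ) ≤ (1-2*ε) * ((r:ℝ) - (j:ℝ)) := by
      intro j hj
      have : (j:ℝ) ≤ (r:ℝ) := by exact_mod_cast hjr' j hj
      exact mul_nonneg h2ε (by linarith)
    have hja : ∀ j ∈ range m, j ≤ a := by
      intro j hj
      have h1 := hstep j hj
      have h2 := hpos j hj
      have : (j:ℝ) ≤ (a:ℝ) := by linarith
      exact_mod_cast this
    have hprodA : ((a.descFactorial m : ℕ) : ℝ) = ∏ j ∈ range m, ((a:ℝ) - (j:ℝ)) := by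
      rw [Nat.descFactorial_eq_prod_range, Nat.cast_prod]
      exact prod_congr rfl fun j hj => by rw [Nat.cast_sub (hja j hj)]
    have hprodR : ((r.descFactorial m : ℕ) : ℝ) = ∏ j ∈ range m, ((r:ℝ) - (j:ℝ)) := by
      rw [Nat.descFactorial_eq_prod_range, Nat.cast_prod]
      exact prod_congr rfl fun j hj => by rw [Nat.cast_sub (hjr' j hj)]
    have hkey : (1-2*ε)^m * (r.choose m : ℝ) ≤ (a.choose m : ℝ) := by
      have hfact : (0:ℝ) < (m.factorial : ℝ) := by exact_mod_cast m.factorial_pos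
      have hd : (1-2*ε)^m * ((r.descFactorial m : ℕ):ℝ) ≤ ((a.descFactorial m:ℕ):ℝ) := by
        rw [hprodA, hprodR]
        calc (1-2*ε)^m * ∏ j ∈ range m, ((r:ℝ) - (j:ℝ))
            = ∏ j ∈ range m, ((1-2*ε) * ((r:ℝ) - (j:ℝ))) := by
              rw [prod_mul_distrib, prod_const, card_range]
          _ ≤ _ := prod_le_prod hpos hstep
      rw [Nat.descFactorial_eq_factorial_mul_choose,
        Nat.descFactorial_eq_factorial_mul_choose] at hd
      push_cast at hd
      have h' : (m.factorial:ℝ) * ((1-2*ε)^m * (r.choose m:ℝ))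
          ≤ (m.factorial:ℝ) * (a.choose m:ℝ) := by nlinarith [hd]
      exact le_of_mul_le_mul_left h' hfact
    set P := powersetCard m (univ : Finset (Fin r)) with hP
    have hcardP : P.card = r.choose m := by
      rw [hP, card_powersetCard, card_univ, Fintype.card_fin]
    have hPne : P.Nonempty := powersetCard_nonempty.mpr (by simpa using hmr)
    set D : α → Finset (Fin r) := fun x => univ.filter (fun i => x ∈ f i) with hD
    have hsum : ∑ I ∈ P, (I.inf f).card = ∑ x ∈ X, ((D x).card.choose m) := by
      have step1 : ∀ I ∈ P, (I.inf f).card = ∑ x ∈ X, (if x ∈ I.inf f then 1 else 0) := by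
        intro I hI
        obtain ⟨hIu, hIc⟩ := mem_powersetCard.mp hI
        have hIne : I.Nonempty := card_pos.mp (by rw [hIc]; omega)
        obtain ⟨i0, hi0⟩ := hIne
        have hXs : I.inf f ⊆ X := le_trans (Finset.inf_le hi0) (hsub i0)
        rw [← Finset.card_filter]
        congr 1
        rw [Finset.filter_mem_eq_inter, Finset.inter_eq_right.mpr hXs]
      rw [sum_congr rfl step1, sum_comm]
      refine sum_congr rfl fun x hx => ?_
      rw [← Finset.card_filter]
      have hPD : P.filter (fun I => x ∈ I.inf f) = powersetCard m (D x) := by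
        ext J
        simp only [mem_filter, hP, mem_powersetCard, hD, aux_mem_inf]
        constructor
        · rintro ⟨⟨hJu, hJc⟩, hall⟩
          exact ⟨fun i hi => mem_filter.mpr ⟨mem_univ i, hall i hi⟩, hJc⟩
        · rintro ⟨hJs, hJc⟩
          exact ⟨⟨subset_univ J, hJc⟩, fun i hi => (mem_filter.mp (hJs hi)).2⟩
      rw [hPD, card_powersetCard]
    have hdeg : ∑ x ∈ X, (D x).card = ∑ i : Fin r, (f i).card := by
      have step : ∀ x ∈ X, (D x).card = ∑ i : Fin r, (if x ∈ f i then 1 else 0) :=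
        fun x _ => Finset.card_filter _ _
      rw [sum_congr rfl step, sum_comm]
      refine sum_congr rfl fun i _ => ?_
      rw [← Finset.card_filter, Finset.filter_mem_eq_inter, Finset.inter_eq_right.mpr (hsub i)]
    have hdeglb : n * a ≤ ∑ x ∈ X, (D x).card := by
      rw [hdeg]
      have hd1 : ((n:ℝ) * (a:ℝ)) ≤ ((∑ i : Fin r, (f i).card : ℕ) : ℝ) := by
        push_cast
        calc (n:ℝ) * (a:ℝ) ≤ (n:ℝ) * ((1-ε)*(r:ℝ)) := mul_le_mul_of_nonneg_left haub hn0
          _ = ∑ _i : Fin r, ((1-ε) * (n:ℝ)) := by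
              rw [sum_const, card_univ, Fintype.card_fin, nsmul_eq_mul]; ring
          _ ≤ ∑ i : Fin r, ((f i).card : ℝ) := sum_le_sum fun i _ => hcard i
      exact_mod_cast hd1
    have hjensen : n * a.choose m ≤ ∑ x ∈ X, ((D x).card.choose m) := by
      have htan : ∀ x ∈ X, a.choose m + (D x).card * a.choose m'
          ≤ (D x).card.choose m + a * a.choose m' := by
        intro x _
        rw [hm']
        exact aux_tangent m' a (D x).card
      have hs := Finset.sum_le_sum htan
      rw [sum_add_distrib, sum_add_distrib, sum_const, sum_const, ← Finset.sum_mul,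
        smul_eq_mul, smul_eq_mul] at hs
      have h2 : n * a * a.choose m' ≤ (∑ x ∈ X, (D x).card) * a.choose m' :=
        Nat.mul_le_mul_right _ hdeglb
      have h3 : n * (a * a.choose m') = n * a * a.choose m' := by ring
      linarith [hs, h2]
    have hCrm : (0:ℝ) < (r.choose m : ℝ) := by exact_mod_cast Nat.choose_pos hmr
    set b : ℝ := ((n * a.choose m : ℕ) : ℝ) / (r.choose m : ℝ) with hb
    have havg : ∃ I ∈ P, b ≤ ((I.inf f).card : ℝ) := by
      apply Finset.exists_le_of_sum_le hPne
      have hcast : (∑ I ∈ P, ((I.inf f).card:ℝ)) = ((∑ I ∈ P, (I.inf f).card : ℕ) : ℝ) := by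
        push_cast; rfl
      rw [sum_const, hcardP, hcast, hsum, nsmul_eq_mul, hb,
        mul_div_cancel₀ _ (ne_of_gt hCrm)]
      exact_mod_cast hjensen
    obtain ⟨I, hIP, hIb⟩ := havg
    refine ⟨I, (mem_powersetCard.mp hIP).2, ?_⟩
    have hfin : (1-2*ε)^m * (n:ℝ) ≤ b := by
      rw [hb, le_div_iff₀ hCrm]
      push_cast
      have h := mul_le_mul_of_nonneg_left hkey hn0
      linarith [h]
    linarith [hIb, hfin]
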